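/- (Theorem 1, QPO preservation impossibility.) Let Y = {y₁, y₂}, let λ > 0, let ψ(·, λ) : ℝ → ℝ be a quasi-convex function, and let μ : (0, ∞) → ℝ be continuous and strictly increasing with μ(t) → −∞ as t → 0⁺ and μ(t) → +∞ as t → ∞. Fix a preference probability p ∈ (0,1) common to two prompts x_g and x_b, and suppose F(u) = p·ψ(u, λ) + (1−p)·ψ(−u, λ) attains a unique global minimum over ℝ at u = u*. Let q_g and q_b be full-support reference policies on Y with q_g equal to the BT-optimal policy π*_g at x_g (i.e., q_g(y₁)/(q_g(y₁)+q_g(y₂)) = p) and q_b ≠ π*_b at x_b. Define the QPO loss over pairs of full-support policies by L(π_g, π_b) = w_g·F(u(π_g, q_g)) + w_b·F(u(π_b, q_b)), where u(π, q) = μ(π(y₁)/q(y₁)) − μ(π(y₂)/q(y₂)) and w_g, w_b > 0. Then every global minimizer (π̂_g, π̂_b) of L satisfies: if π̂_b ≠ q_b, then π̂_g ≠ π*_g. That is, a QPO minimizer cannot move the policy away from the reference at the bad prompt while simultaneously preserving the BT-optimal policy at the good prompt. -/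
import Mathlib

open Filter Set

/-- For a full-support reference policy `q` on two elements, the map
`π ↦ μ (π 0 / q 0) − μ (π 1 / q 1)` is surjective onto `ℝ` over full-support policies. -/
private lemma qpo_surj_aux (μ : ℝ → ℝ)
    (hμcont : ContinuousOn μ (Set.Ioi 0))
    (hμ0 : Filter.Tendsto μ (nhdsWithin 0 (Set.Ioi 0)) Filter.atBot)
    (q : Fin 2 → ℝ) (hq : ∀ i, 0 < q i) (u : ℝ) :
    ∃ π : Fin 2 → ℝ, (∀ i, 0 < π i) ∧ π 0 + π 1 = 1 ∧
      μ (π 0 / q 0) - μ (π 1 / q 1) = u := by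
  have hq0 := hq 0
  have hq1 := hq 1
  set s : Set ℝ := Set.Ioo 0 1 with hs
  set g : ℝ → ℝ := fun t => μ (t / q 0) - μ ((1 - t) / q 1) with hgdef
  have hmaps0 : Set.MapsTo (fun t : ℝ => t / q 0) s (Set.Ioi 0) := fun t ht =>
    div_pos ht.1 hq0
  have hmaps1 : Set.MapsTo (fun t : ℝ => (1 - t) / q 1) s (Set.Ioi 0) := fun t ht =>
    div_pos (by linarith [ht.2]) hq1
  have hgc : ContinuousOn g s := by
    apply ContinuousOn.sub
    · exact hμcont.comp ((continuous_id.div_const _).continuousOn) hmaps0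
    · exact hμcont.comp (((continuous_const.sub continuous_id).div_const _).continuousOn) hmaps1
  -- limit of g at 0 within s is atBot
  have h0a : Filter.Tendsto (fun t : ℝ => t / q 0) (nhdsWithin 0 s) (nhdsWithin 0 (Set.Ioi 0)) := by
    rw [tendsto_nhdsWithin_iff]
    constructor
    · have h := ((continuous_id.div_const (q 0)).tendsto 0).mono_left
        (nhdsWithin_le_nhds (s := s))
      simpa using h
    · exact eventually_mem_nhdsWithin.mono fun t ht => hmaps0 ht
  have h0b : Filter.Tendsto (fun t : ℝ => (1 - t) / q 1) (nhdsWithin 0 s)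
      (nhdsWithin (1 / q 1) (Set.Ioi 0)) := by
    rw [tendsto_nhdsWithin_iff]
    constructor
    · have hcont : Continuous (fun t : ℝ => (1 - t) / q 1) := by fun_prop
      have h := (hcont.tendsto 0).mono_left (nhdsWithin_le_nhds (s := s))
      simpa using h
    · exact eventually_mem_nhdsWithin.mono fun t ht => hmaps1 ht
  have hμat : Filter.Tendsto μ (nhdsWithin (1 / q 1) (Set.Ioi 0)) (nhds (μ (1 / q 1))) :=
    hμcont (1 / q 1) (by exact div_pos one_pos hq1)
  have hbot : Filter.Tendsto g (nhdsWithin 0 s) Filter.atBot := by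
    have h1 : Filter.Tendsto (fun t : ℝ => μ (t / q 0)) (nhdsWithin 0 s) Filter.atBot :=
      hμ0.comp h0a
    have h2 : Filter.Tendsto (fun t : ℝ => -μ ((1 - t) / q 1)) (nhdsWithin 0 s)
        (nhds (-μ (1 / q 1))) := (hμat.comp h0b).neg
    have := h1.atBot_add h2
    simpa [hgdef, sub_eq_add_neg] using this
  -- limit of g at 1 within s is atTop
  have h1a : Filter.Tendsto (fun t : ℝ => t / q 0) (nhdsWithin 1 s)
      (nhdsWithin (1 / q 0) (Set.Ioi 0)) := by
    rw [tendsto_nhdsWithin_iff]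
    constructor
    · have h := ((continuous_id.div_const (q 0)).tendsto 1).mono_left
        (nhdsWithin_le_nhds (s := s))
      simpa using h
    · exact eventually_mem_nhdsWithin.mono fun t ht => hmaps0 ht
  have h1b : Filter.Tendsto (fun t : ℝ => (1 - t) / q 1) (nhdsWithin 1 s)
      (nhdsWithin 0 (Set.Ioi 0)) := by
    rw [tendsto_nhdsWithin_iff]
    constructor
    · have hcont : Continuous (fun t : ℝ => (1 - t) / q 1) := by fun_prop
      have h := (hcont.tendsto 1).mono_left (nhdsWithin_le_nhds (s := s))
      simpa using h
    · exact eventually_mem_nhdsWithin.mono fun t ht => hmaps1 ht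
  have hμat0 : Filter.Tendsto μ (nhdsWithin (1 / q 0) (Set.Ioi 0)) (nhds (μ (1 / q 0))) :=
    hμcont (1 / q 0) (by exact div_pos one_pos hq0)
  have htop : Filter.Tendsto g (nhdsWithin 1 s) Filter.atTop := by
    have h1 : Filter.Tendsto (fun t : ℝ => μ (t / q 0)) (nhdsWithin 1 s)
        (nhds (μ (1 / q 0))) := hμat0.comp h1a
    have h2 : Filter.Tendsto (fun t : ℝ => -μ ((1 - t) / q 1)) (nhdsWithin 1 s)
        Filter.atTop := tendsto_neg_atBot_atTop.comp (hμ0.comp h1b)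
    have := h1.add_atTop h2
    simpa [hgdef, sub_eq_add_neg] using this
  haveI i0 : (nhdsWithin (0 : ℝ) s).NeBot := left_nhdsWithin_Ioo_neBot (by norm_num)
  haveI i1 : (nhdsWithin (1 : ℝ) s).NeBot := right_nhdsWithin_Ioo_neBot (by norm_num)
  have hsurj : Set.univ ⊆ g '' s :=
    isPreconnected_Ioo.intermediate_value_Iii (l₁ := nhdsWithin 0 s) (l₂ := nhdsWithin 1 s)
      inf_le_right inf_le_right hgc hbot htop
  obtain ⟨t, hts, hgt⟩ := hsurj (Set.mem_univ u)
  refine ⟨![t, 1 - t], ?_, by simp, ?_⟩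
  · intro i
    fin_cases i
    · simpa using hts.1
    · simpa using (by linarith [hts.2] : (0:ℝ) < 1 - t)
  · simpa [hgdef] using hgt

/-- Theorem 1 (QPO preservation impossibility).  On `Y = {y₁, y₂}` (here `Fin 2`), let
`ψ` be quasi-convex, `μ : (0,∞) → ℝ` continuous and strictly increasing with
`μ(t) → −∞` as `t → 0⁺` and `μ(t) → +∞` as `t → ∞`, and let `p ∈ (0,1)` be the common
preference probability at a good prompt and a bad prompt.  Suppose
`F(u) = p ψ(u) + (1−p) ψ(−u)` has a unique global minimizer `u*`.  Let the reference
policy `qg` equal the BT-optimal policy `π*_g` at the good prompt, and `qb ≠ π*_b` at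
the bad prompt.  Then every global minimizer `(π̂g, π̂b)` of the decoupled QPO loss
`L(πg, πb) = wg F(μ(πg y₁ / qg y₁) − μ(πg y₂ / qg y₂)) + wb F(μ(πb y₁ / qb y₁) − μ(πb y₂ / qb y₂))`
over pairs of full-support policies satisfies: if `π̂b ≠ qb` then `π̂g ≠ π*_g`. -/
theorem qpo_preservation_impossibility
    (ψ : ℝ → ℝ) (hψ : QuasiconvexOn ℝ Set.univ ψ)
    (μ : ℝ → ℝ)
    (hμcont : ContinuousOn μ (Set.Ioi 0))
    (hμmono : StrictMonoOn μ (Set.Ioi 0))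
    (hμ0 : Filter.Tendsto μ (nhdsWithin 0 (Set.Ioi 0)) Filter.atBot)
    (hμtop : Filter.Tendsto μ Filter.atTop Filter.atTop)
    (p : ℝ) (hp : p ∈ Set.Ioo (0 : ℝ) 1)
    (F : ℝ → ℝ) (hF : ∀ u, F u = p * ψ u + (1 - p) * ψ (-u))
    (ustar : ℝ) (hustarMin : ∀ u, F ustar ≤ F u)
    (hustarUniq : ∀ u, F u = F ustar → u = ustar)
    (πstarg πstarb qg qb : Fin 2 → ℝ)
    (hgPos : ∀ i, 0 < πstarg i) (hgSum : πstarg 0 + πstarg 1 = 1)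
    (hbPos : ∀ i, 0 < πstarb i) (hbSum : πstarb 0 + πstarb 1 = 1)
    (hqgPos : ∀ i, 0 < qg i) (hqgSum : qg 0 + qg 1 = 1)
    (hqbPos : ∀ i, 0 < qb i) (hqbSum : qb 0 + qb 1 = 1)
    (hgBT : πstarg 0 / (πstarg 0 + πstarg 1) = p)
    (hbBT : πstarb 0 / (πstarb 0 + πstarb 1) = p)
    (hgood : qg = πstarg) (hbad : qb ≠ πstarb)
    (wg wb : ℝ) (hwg : 0 < wg) (hwb : 0 < wb)
    (L : (Fin 2 → ℝ) → (Fin 2 → ℝ) → ℝ)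
    (hL : ∀ πg πb : Fin 2 → ℝ,
      L πg πb = wg * F (μ (πg 0 / qg 0) - μ (πg 1 / qg 1)) +
                wb * F (μ (πb 0 / qb 0) - μ (πb 1 / qb 1)))
    (πhatg πhatb : Fin 2 → ℝ)
    (hhatgPos : ∀ i, 0 < πhatg i) (hhatgSum : πhatg 0 + πhatg 1 = 1)
    (hhatbPos : ∀ i, 0 < πhatb i) (hhatbSum : πhatb 0 + πhatb 1 = 1)
    (hmin : ∀ πg πb : Fin 2 → ℝ, (∀ i, 0 < πg i) → πg 0 + πg 1 = 1 →
      (∀ i, 0 < πb i) → πb 0 + πb 1 = 1 → L πhatg πhatb ≤ L πg πb) :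
    πhatb ≠ qb → πhatg ≠ πstarg := by
  intro hbne hgeq
  -- realize u* at both prompts
  obtain ⟨πg', hg'pos, hg'sum, hg'val⟩ := qpo_surj_aux μ hμcont hμ0 qg hqgPos ustar
  obtain ⟨πb', hb'pos, hb'sum, hb'val⟩ := qpo_surj_aux μ hμcont hμ0 qb hqbPos ustar
  have hle := hmin πg' πb' hg'pos hg'sum hb'pos hb'sum
  rw [hL, hL, hg'val, hb'val] at hle
  set ug := μ (πhatg 0 / qg 0) - μ (πhatg 1 / qg 1) with hugdef
  set ub := μ (πhatb 0 / qb 0) - μ (πhatb 1 / qb 1) with hubdef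
  have h1 : F ustar ≤ F ug := hustarMin ug
  have h2 : F ustar ≤ F ub := hustarMin ub
  have hA : wg * F ustar ≤ wg * F ug := mul_le_mul_of_nonneg_left h1 hwg.le
  have hB : wb * F ustar ≤ wb * F ub := mul_le_mul_of_nonneg_left h2 hwb.le
  have hAeq : wg * F ug = wg * F ustar := le_antisymm (by linarith) hA
  have hBeq : wb * F ub = wb * F ustar := le_antisymm (by linarith) hB
  have hugu : ug = ustar := hustarUniq _ (mul_left_cancel₀ (ne_of_gt hwg) hAeq)
  have hubu : ub = ustar := hustarUniq _ (mul_left_cancel₀ (ne_of_gt hwb) hBeq)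
  -- since πhatg = πstarg = qg, ustar = 0
  have hq : πhatg = qg := by rw [hgeq, hgood]
  have hust0 : ustar = 0 := by
    rw [← hugu, hugdef, hq, div_self (ne_of_gt (hqgPos 0)), div_self (ne_of_gt (hqgPos 1))]
    ring
  -- hence μ of the two ratios at the bad prompt agree
  have hμeq : μ (πhatb 0 / qb 0) = μ (πhatb 1 / qb 1) := by
    have := hubu
    rw [hubdef, hust0] at this
    linarith
  have hrat : πhatb 0 / qb 0 = πhatb 1 / qb 1 :=
    hμmono.injOn (div_pos (hhatbPos 0) (hqbPos 0)) (div_pos (hhatbPos 1) (hqbPos 1)) hμeq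
  have e : πhatb 0 * qb 1 = πhatb 1 * qb 0 :=
    (div_eq_div_iff (ne_of_gt (hqbPos 0)) (ne_of_gt (hqbPos 1))).mp hrat
  have hc : πhatb 1 = 1 - πhatb 0 := by linarith
  have hd : qb 1 = 1 - qb 0 := by linarith
  rw [hc, hd] at e
  have h00 : πhatb 0 = qb 0 := by linear_combination e
  have : πhatb = qb := by
    funext i
    fin_cases i
    · exact h00
    · show πhatb 1 = qb 1
      linarith
  exact hbne this
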